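/- Let x, q be complex numbers with |q| < 1. Then Σ_{i,j≥0} x^i · q^((i²+i)/2 + ij + j²) / ((q;q)_i · (q;q)_j) · (q^(i+j+1);q)_∞ = (−xq;q)_∞. -/

import Mathlib

/-- Finite q-Pochhammer symbol `(a; q)_n = ∏_{k=0}^{n-1} (1 - a q^k)`. -/
noncomputable def qPoch (a q : ℂ) (n : ℕ) : ℂ := ∏ k ∈ Finset.range n, (1 - a * q ^ k)

/-- Infinite q-Pochhammer symbol `(a; q)_∞ = ∏_{k=0}^{∞} (1 - a q^k)`. -/
noncomputable def qPochInf (a q : ℂ) : ℂ := ∏' k : ℕ, (1 - a * q ^ k)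

open Finset Filter Complex Topology

set_option maxHeartbeats 1000000

namespace Stmt13Aux

lemma qPoch_zero (a q : ℂ) : qPoch a q 0 = 1 := by simp [qPoch]

lemma qPoch_succ (a q : ℂ) (n : ℕ) :
    qPoch a q (n + 1) = qPoch a q n * (1 - a * q ^ n) := Finset.prod_range_succ _ _

lemma qPoch_add (a q : ℂ) (m n : ℕ) :
    qPoch a q (m + n) = qPoch a q m * ∏ t ∈ range n, (1 - a * q ^ (m + t)) := by
  simpa [qPoch] using Finset.prod_range_add (fun k => (1 - a * q ^ k)) m n

lemma one_sub_ne {q : ℂ} (hq : ‖q‖ < 1) {w : ℂ} (hw : ‖w‖ ≤ ‖q‖) : (1 : ℂ) - w ≠ 0 := by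
  intro h
  have : (1 : ℂ) = w := by linear_combination h
  rw [← this, norm_one] at hw
  linarith

lemma norm_q_mul_pow_le {q : ℂ} (hq : ‖q‖ < 1) (k : ℕ) : ‖q * q ^ k‖ ≤ ‖q‖ := by
  rw [norm_mul, norm_pow]
  calc ‖q‖ * ‖q‖ ^ k ≤ ‖q‖ * 1 :=
        mul_le_mul_of_nonneg_left (pow_le_one₀ (norm_nonneg q) hq.le) (norm_nonneg q)
    _ = ‖q‖ := mul_one _

lemma qPoch_q_ne_zero {q : ℂ} (hq : ‖q‖ < 1) (n : ℕ) : qPoch q q n ≠ 0 :=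
  Finset.prod_ne_zero_iff.2 fun k _ => one_sub_ne hq (norm_q_mul_pow_le hq k)

lemma norm_qPoch_q_ge {q : ℂ} (hq : ‖q‖ < 1) (n : ℕ) :
    (1 - ‖q‖) ^ n ≤ ‖qPoch q q n‖ := by
  rw [qPoch, norm_prod]
  calc (1 - ‖q‖) ^ n = ∏ k ∈ range n, (1 - ‖q‖) := by rw [Finset.prod_const, Finset.card_range]
    _ ≤ ∏ k ∈ range n, ‖1 - q * q ^ k‖ := by
        refine Finset.prod_le_prod (fun k _ => by linarith) fun k _ => ?_
        have h1 : ‖q * q ^ k‖ ≤ ‖q‖ := norm_q_mul_pow_le hq k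
        calc 1 - ‖q‖ ≤ 1 - ‖q * q ^ k‖ := by linarith
          _ ≤ ‖1 - q * q ^ k‖ := by
              have := norm_sub_norm_le (1 : ℂ) (q * q ^ k)
              simpa using this

lemma norm_qPoch_le (a : ℂ) {q : ℂ} (hq : ‖q‖ < 1) (n : ℕ) :
    ‖qPoch a q n‖ ≤ Real.exp (‖a‖ / (1 - ‖q‖)) := by
  rw [qPoch, norm_prod]
  calc ∏ k ∈ range n, ‖1 - a * q ^ k‖ ≤ ∏ k ∈ range n, Real.exp (‖a‖ * ‖q‖ ^ k) := by
        refine Finset.prod_le_prod (fun k _ => norm_nonneg _) fun k _ => ?_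
        calc ‖1 - a * q ^ k‖ ≤ ‖(1:ℂ)‖ + ‖a * q ^ k‖ := norm_sub_le _ _
          _ = 1 + ‖a‖ * ‖q‖ ^ k := by rw [norm_one, norm_mul, norm_pow]
          _ ≤ Real.exp (‖a‖ * ‖q‖ ^ k) := by
              have := Real.add_one_le_exp (‖a‖ * ‖q‖ ^ k)
              linarith
    _ = Real.exp (∑ k ∈ range n, ‖a‖ * ‖q‖ ^ k) := (Real.exp_sum _ _).symm
    _ ≤ Real.exp (‖a‖ / (1 - ‖q‖)) := by
        refine Real.exp_le_exp.2 ?_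
        rw [← Finset.mul_sum]
        have h1 : ∑ k ∈ range n, ‖q‖ ^ k ≤ (1 - ‖q‖)⁻¹ := by
          have := Summable.sum_le_tsum (range n) (fun k _ => pow_nonneg (norm_nonneg q) k)
            (summable_geometric_of_lt_one (norm_nonneg q) hq)
          rwa [tsum_geometric_of_lt_one (norm_nonneg q) hq] at this
        rw [div_eq_mul_inv]
        exact mul_le_mul_of_nonneg_left h1 (norm_nonneg a)

lemma multipliable_one_sub (a : ℂ) {q : ℂ} (hq : ‖q‖ < 1) :
    Multipliable (fun k : ℕ => 1 - a * q ^ k) := by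
  by_cases hz : ∃ k, 1 - a * q ^ k = 0
  · obtain ⟨k, hk⟩ := hz
    refine ⟨0, ?_⟩
    have hev : ∀ᶠ s : Finset ℕ in atTop, ∏ i ∈ s, (1 - a * q ^ i) = 0 := by
      filter_upwards [Filter.eventually_ge_atTop ({k} : Finset ℕ)] with s hs
      exact Finset.prod_eq_zero (hs (Finset.mem_singleton_self k)) hk
    exact Tendsto.congr' (hev.mono fun s h => h.symm) tendsto_const_nhds
  · push_neg at hz
    refine Complex.multipliable_of_summable_log ?_
    have h0 : Tendsto (fun n : ℕ => ‖-(a * q ^ n)‖) atTop (𝓝 0) := by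
      have := (tendsto_pow_atTop_nhds_zero_of_norm_lt_one hq).const_mul a
      rw [mul_zero] at this
      simpa using this.norm
    have hev : ∀ᶠ n : ℕ in atTop, ‖-(a * q ^ n)‖ ≤ 1/2 :=
      (h0.eventually_lt_const (by norm_num)).mono fun n h => h.le
    refine Summable.of_norm_bounded_eventually (g := fun n => 3/2 * ‖a * q ^ n‖) ?_ ?_
    · refine Summable.mul_left _ ?_
      simpa [norm_mul, norm_pow] using
        (summable_geometric_of_lt_one (norm_nonneg q) hq).mul_left ‖a‖
    · rw [Nat.cofinite_eq_atTop]
      filter_upwards [hev] with n hn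
      have := Complex.norm_log_one_add_half_le_self hn
      simpa [sub_eq_add_neg] using this

lemma tendsto_qPoch (a : ℂ) {q : ℂ} (hq : ‖q‖ < 1) :
    Tendsto (fun N => qPoch a q N) atTop (𝓝 (qPochInf a q)) :=
  (multipliable_one_sub a hq).hasProd.tendsto_prod_nat

lemma norm_qPochInf_le (a : ℂ) {q : ℂ} (hq : ‖q‖ < 1) :
    ‖qPochInf a q‖ ≤ Real.exp (‖a‖ / (1 - ‖q‖)) :=
  le_of_tendsto (tendsto_qPoch a hq).norm
    (Filter.Eventually.of_forall fun n => norm_qPoch_le a hq n)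

noncomputable def qb (q : ℂ) (N i : ℕ) : ℂ :=
  if i ≤ N then qPoch q q N / (qPoch q q i * qPoch q q (N - i)) else 0

lemma qb_zero {q : ℂ} (hq : ‖q‖ < 1) (N : ℕ) : qb q N 0 = 1 := by
  simp [qb, qPoch_zero]
  exact qPoch_q_ne_zero hq N

lemma qb_self {q : ℂ} (hq : ‖q‖ < 1) (N : ℕ) : qb q N N = 1 := by
  simp [qb, qPoch_zero]
  exact qPoch_q_ne_zero hq N

lemma qb_of_gt {q : ℂ} {N i : ℕ} (h : N < i) : qb q N i = 0 := by
  simp [qb, Nat.not_le.2 h]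

lemma qb_pascal {q : ℂ} (hq : ‖q‖ < 1) (N m : ℕ) (hm : m + 1 ≤ N + 1) :
    qb q (N + 1) (m + 1) = qb q N (m + 1) + q ^ (N - m) * qb q N m := by
  rcases Nat.lt_or_ge N (m + 1) with h | h
  · have hmN : m = N := by omega
    subst hmN
    rw [qb_self hq, qb_self hq, qb_of_gt (by omega)]
    simp
  · obtain ⟨A, rfl⟩ : ∃ A, N = A + m + 1 := ⟨N - m - 1, by omega⟩
    have e1 : A + m + 1 + 1 - (m + 1) = A + 1 := by omega
    have e2 : A + m + 1 - (m + 1) = A := by omega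
    have e3 : A + m + 1 - m = A + 1 := by omega
    rw [qb, qb, qb, if_pos (by omega), if_pos (by omega), if_pos (by omega), e1, e2, e3]
    have hP : ∀ n : ℕ, qPoch q q n ≠ 0 := qPoch_q_ne_zero hq
    have f1 : qPoch q q (A + m + 1 + 1) = qPoch q q (A + m + 1) * (1 - q * q ^ (A + m + 1)) :=
      qPoch_succ _ _ _
    have f2 : qPoch q q (m + 1) = qPoch q q m * (1 - q * q ^ m) := qPoch_succ _ _ _
    have f3 : qPoch q q (A + 1) = qPoch q q A * (1 - q * q ^ A) := qPoch_succ _ _ _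
    rw [f1, f2, f3]
    have h1 : (1 : ℂ) - q * q ^ m ≠ 0 := one_sub_ne hq (norm_q_mul_pow_le hq m)
    have h2 : (1 : ℂ) - q * q ^ A ≠ 0 := one_sub_ne hq (norm_q_mul_pow_le hq A)
    rw [show q ^ (A + m + 1) = q ^ A * q ^ m * q by rw [pow_add, pow_add, pow_one]]
    have hPm := hP m
    have hPA := hP A
    rw [← mul_div_assoc]
    rw [div_add_div _ _ (mul_ne_zero (mul_ne_zero hPm h1) hPA)
      (mul_ne_zero hPm (mul_ne_zero hPA h2)),
      div_eq_div_iff (mul_ne_zero (mul_ne_zero hPm h1) (mul_ne_zero hPA h2))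
      (mul_ne_zero (mul_ne_zero (mul_ne_zero hPm h1) hPA)
        (mul_ne_zero hPm (mul_ne_zero hPA h2)))]
    ring

def tri (i : ℕ) : ℕ := ∑ k ∈ Finset.range i, k

lemma tri_zero : tri 0 = 0 := rfl

lemma tri_succ (i : ℕ) : tri (i + 1) = tri i + i := Finset.sum_range_succ _ _

lemma euler_fin {q : ℂ} (hq : ‖q‖ < 1) (w : ℂ) (N : ℕ) :
    ∑ i ∈ range (N + 1), qb q N i * q ^ tri i * w ^ i = qPoch (-w) q N := by
  induction N with
  | zero => simp [qb_zero hq, tri_zero, qPoch]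
  | succ N ih =>
    rw [Finset.sum_range_succ']
    have hstep : ∀ i ∈ range (N + 1),
        qb q (N + 1) (i + 1) * q ^ tri (i + 1) * w ^ (i + 1)
          = qb q N (i + 1) * q ^ tri (i + 1) * w ^ (i + 1)
            + (w * q ^ N) * (qb q N i * q ^ tri i * w ^ i) := by
      intro i hi
      have hi' : i ≤ N := Nat.lt_succ_iff.mp (Finset.mem_range.mp hi)
      rw [qb_pascal hq N i (by omega), add_mul, add_mul]
      congr 1
      have hpow : q ^ (N - i) * q ^ i = q ^ N := by
        rw [← pow_add]; congr 1; omega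
      calc q ^ (N - i) * qb q N i * q ^ tri (i + 1) * w ^ (i + 1)
          = (q ^ (N - i) * q ^ i) * (qb q N i * q ^ tri i * w ^ i) * w := by
            rw [tri_succ, pow_add, pow_succ]; ring
        _ = (w * q ^ N) * (qb q N i * q ^ tri i * w ^ i) := by rw [hpow]; ring
    rw [Finset.sum_congr rfl hstep, Finset.sum_add_distrib, ← Finset.mul_sum, ih]
    have hshift : ∑ i ∈ range (N + 1), qb q N (i + 1) * q ^ tri (i + 1) * w ^ (i + 1)
        = qPoch (-w) q N - 1 := by
      have h2 := Finset.sum_range_succ' (fun i => qb q N i * q ^ tri i * w ^ i) (N + 1)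
      have h3 := Finset.sum_range_succ (fun i => qb q N i * q ^ tri i * w ^ i) (N + 1)
      rw [h3, ih, qb_of_gt (Nat.lt_succ_self N)] at h2
      simp only [zero_mul, add_zero] at h2
      have : qb q N 0 * q ^ tri 0 * w ^ 0 = 1 := by simp [qb_zero hq, tri_zero]
      rw [this] at h2
      rw [eq_sub_iff_add_eq]
      exact h2.symm
    rw [hshift]
    rw [qPoch_succ]
    simp [qb_zero hq, tri_zero]
    ring

lemma durfee_fin {q : ℂ} (hq : ‖q‖ < 1) :
    ∀ N, ∀ z : ℂ,
      ∑ j ∈ range (N + 1),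
        z ^ j * q ^ (j * j) * qb q N j * qPoch (z * q ^ (j + 1)) q (N - j) = 1 := by
  intro N
  induction N with
  | zero => intro z; simp [qb_zero hq, qPoch]
  | succ N ih =>
    intro z
    rw [Finset.sum_range_succ']
    have hstep : ∀ j ∈ range (N + 1),
        z ^ (j + 1) * q ^ ((j + 1) * (j + 1)) * qb q (N + 1) (j + 1)
            * qPoch (z * q ^ (j + 1 + 1)) q (N + 1 - (j + 1))
          = z ^ (j + 1) * q ^ ((j + 1) * (j + 1)) * qb q N (j + 1)
              * qPoch (z * q ^ (j + 1 + 1)) q (N + 1 - (j + 1))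
            + (z * q ^ (N + 1)) *
              ((z * q) ^ j * q ^ (j * j) * qb q N j * qPoch ((z * q) * q ^ (j + 1)) q (N - j)) := by
      intro j hj
      have hj' : j ≤ N := Nat.lt_succ_iff.mp (Finset.mem_range.mp hj)
      have e1 : N + 1 - (j + 1) = N - j := by omega
      rw [qb_pascal hq N j (by omega), mul_add, add_mul, e1]
      congr 1
      have harg : (z * q) * q ^ (j + 1) = z * q ^ (j + 1 + 1) := by
        rw [pow_succ]; ring
      rw [harg]
      have hqpow : q ^ ((j + 1) * (j + 1)) * q ^ (N - j)
          = q ^ (N + 1) * q ^ j * q ^ (j * j) := by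
        rw [← pow_add, ← pow_add, ← pow_add]
        congr 1
        have : (j + 1) * (j + 1) = j * j + 2 * j + 1 := by ring
        omega
      calc z ^ (j + 1) * q ^ ((j + 1) * (j + 1)) * (q ^ (N - j) * qb q N j)
            * qPoch (z * q ^ (j + 1 + 1)) q (N - j)
          = (q ^ ((j + 1) * (j + 1)) * q ^ (N - j)) * z ^ (j + 1) * qb q N j
            * qPoch (z * q ^ (j + 1 + 1)) q (N - j) := by ring
        _ = (q ^ (N + 1) * q ^ j * q ^ (j * j)) * z ^ (j + 1) * qb q N j
            * qPoch (z * q ^ (j + 1 + 1)) q (N - j) := by rw [hqpow]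
        _ = (z * q ^ (N + 1)) *
            ((z * q) ^ j * q ^ (j * j) * qb q N j * qPoch (z * q ^ (j + 1 + 1)) q (N - j)) := by
            rw [mul_pow, pow_succ z j]; ring
    rw [Finset.sum_congr rfl hstep, Finset.sum_add_distrib, ← Finset.mul_sum, ih (z * q)]
    have hf0 : z ^ 0 * q ^ (0 * 0) * qb q (N + 1) 0 * qPoch (z * q ^ (0 + 1)) q (N + 1 - 0)
        = z ^ 0 * q ^ (0 * 0) * qb q N 0 * qPoch (z * q ^ (0 + 1)) q (N + 1 - 0) := by
      rw [qb_zero hq, qb_zero hq]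
    rw [hf0, add_right_comm]
    have hsum' : (∑ j ∈ range (N + 1), z ^ (j + 1) * q ^ ((j + 1) * (j + 1)) * qb q N (j + 1)
            * qPoch (z * q ^ (j + 1 + 1)) q (N + 1 - (j + 1)))
          + z ^ 0 * q ^ (0 * 0) * qb q N 0 * qPoch (z * q ^ (0 + 1)) q (N + 1 - 0)
        = ∑ j ∈ range (N + 1 + 1),
            z ^ j * q ^ (j * j) * qb q N j * qPoch (z * q ^ (j + 1)) q (N + 1 - j) :=
      (Finset.sum_range_succ' (fun j => z ^ j * q ^ (j * j) * qb q N j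
        * qPoch (z * q ^ (j + 1)) q (N + 1 - j)) (N + 1)).symm
    rw [hsum', Finset.sum_range_succ, qb_of_gt (Nat.lt_succ_self N),
      mul_zero (z ^ (N + 1) * q ^ ((N + 1) * (N + 1))), zero_mul, add_zero]
    have hfac : ∀ j ∈ range (N + 1),
        z ^ j * q ^ (j * j) * qb q N j * qPoch (z * q ^ (j + 1)) q (N + 1 - j)
          = (1 - z * q ^ (N + 1)) *
            (z ^ j * q ^ (j * j) * qb q N j * qPoch (z * q ^ (j + 1)) q (N - j)) := by
      intro j hj
      have hj' : j ≤ N := Nat.lt_succ_iff.mp (Finset.mem_range.mp hj)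
      have e3 : N + 1 - j = (N - j) + 1 := by omega
      rw [e3, qPoch_succ]
      have e4 : z * q ^ (j + 1) * q ^ (N - j) = z * q ^ (N + 1) := by
        rw [mul_assoc, ← pow_add]
        congr 2
        omega
      rw [e4]
      ring
    rw [Finset.sum_congr rfl hfac, ← Finset.mul_sum, ih z]
    ring



lemma qb_eq {q : ℂ} (hq : ‖q‖ < 1) {N i : ℕ} (h : i ≤ N) :
    qb q N i = (∏ t ∈ range i, (1 - q * q ^ (N - i + t))) / qPoch q q i := by
  obtain ⟨m, rfl⟩ : ∃ m, N = m + i := ⟨N - i, by omega⟩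
  rw [qb, if_pos h, Nat.add_sub_cancel, qPoch_add, mul_comm (qPoch q q i) (qPoch q q m),
    mul_div_mul_left _ _ (qPoch_q_ne_zero hq m)]

lemma qb_norm_le {q : ℂ} (hq : ‖q‖ < 1) (N i : ℕ) :
    ‖qb q N i‖ ≤ (2 / (1 - ‖q‖)) ^ i := by
  have hd : 0 < 1 - ‖q‖ := by linarith
  rcases le_or_gt i N with h | h
  · rw [qb_eq hq h, norm_div, div_pow]
    refine div_le_div₀ (by positivity) ?_ (by positivity) (norm_qPoch_q_ge hq i)
    rw [norm_prod]
    calc ∏ t ∈ range i, ‖1 - q * q ^ (N - i + t)‖ ≤ ∏ t ∈ range i, 2 := by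
          refine Finset.prod_le_prod (fun t _ => norm_nonneg _) fun t _ => ?_
          calc ‖1 - q * q ^ (N - i + t)‖ ≤ ‖(1 : ℂ)‖ + ‖q * q ^ (N - i + t)‖ := norm_sub_le _ _
            _ ≤ 1 + ‖q‖ := by
                rw [norm_one]
                linarith [norm_q_mul_pow_le hq (N - i + t)]
            _ ≤ 2 := by linarith
      _ = 2 ^ i := by rw [Finset.prod_const, Finset.card_range]
  · rw [qb_of_gt h, norm_zero]
    positivity

lemma qb_tendsto {q : ℂ} (hq : ‖q‖ < 1) (i : ℕ) :
    Tendsto (fun N => qb q N i) atTop (𝓝 (qPoch q q i)⁻¹) := by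
  have hev : ∀ᶠ N in atTop, (∏ t ∈ range i, (1 - q * q ^ (N - i + t))) / qPoch q q i
      = qb q N i := by
    filter_upwards [Filter.eventually_ge_atTop i] with N hN
    exact (qb_eq hq hN).symm
  refine Tendsto.congr' hev ?_
  have hnum : Tendsto (fun N => ∏ t ∈ range i, (1 - q * q ^ (N - i + t))) atTop
      (𝓝 (∏ t ∈ range i, (1 : ℂ))) := by
    refine tendsto_finset_prod _ fun t _ => ?_
    have h1 : Tendsto (fun N : ℕ => N - i + t) atTop atTop :=
      (tendsto_add_atTop_nat t).comp (tendsto_sub_atTop_nat i)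
    have h2 : Tendsto (fun N : ℕ => q ^ (N - i + t)) atTop (𝓝 0) :=
      (tendsto_pow_atTop_nhds_zero_of_norm_lt_one hq).comp h1
    have h3 := (tendsto_const_nhds (x := (1 : ℂ)) (f := atTop)).sub (h2.const_mul q)
    simpa using h3
  have := hnum.div_const (qPoch q q i)
  rw [Finset.prod_const_one, one_div] at this
  exact this

lemma summable_pow_sq {C r : ℝ} (hC : 0 ≤ C) (hr0 : 0 ≤ r) (hr : r < 1) (e : ℕ → ℕ)
    (he : ∀ i, e i + i ≤ e (i + 1)) : Summable (fun i => C ^ i * r ^ e i) := by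
  refine summable_of_ratio_norm_eventually_le (r := 1/2) (by norm_num) ?_
  have h0 : Tendsto (fun i : ℕ => C * r ^ i) atTop (𝓝 0) := by
    simpa using (tendsto_pow_atTop_nhds_zero_of_lt_one hr0 hr).const_mul C
  filter_upwards [h0.eventually_lt_const (show (0:ℝ) < 1/2 by norm_num)] with i hi
  have hterm : (0:ℝ) ≤ C ^ i * r ^ e i := by positivity
  rw [Real.norm_of_nonneg (by positivity), Real.norm_of_nonneg hterm]
  calc C ^ (i + 1) * r ^ e (i + 1) ≤ C ^ (i + 1) * r ^ (e i + i) := by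
        refine mul_le_mul_of_nonneg_left ?_ (by positivity)
        exact pow_le_pow_of_le_one hr0 hr.le (he i)
    _ = (C * r ^ i) * (C ^ i * r ^ e i) := by rw [pow_succ, pow_add]; ring
    _ ≤ (1/2) * (C ^ i * r ^ e i) := mul_le_mul_of_nonneg_right hi.le hterm

lemma euler_inf {q : ℂ} (hq : ‖q‖ < 1) (w : ℂ) :
    ∑' i, (qPoch q q i)⁻¹ * q ^ tri i * w ^ i = qPochInf (-w) q := by
  have hd : 0 < 1 - ‖q‖ := by linarith
  set f : ℕ → ℕ → ℂ := fun N i => qb q N i * q ^ tri i * w ^ i with hf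
  have hbound : Summable (fun i => (2 * ‖w‖ / (1 - ‖q‖)) ^ i * ‖q‖ ^ tri i) := by
    refine summable_pow_sq (by positivity) (norm_nonneg q) hq tri fun i => ?_
    rw [tri_succ]
  have htend : ∀ i, Tendsto (fun N => f N i) atTop
      (𝓝 ((qPoch q q i)⁻¹ * q ^ tri i * w ^ i)) :=
    fun i => ((qb_tendsto hq i).mul_const _).mul_const _
  have hb : ∀ N i, ‖f N i‖ ≤ (2 * ‖w‖ / (1 - ‖q‖)) ^ i * ‖q‖ ^ tri i := by
    intro N i
    rw [hf]
    simp only [norm_mul, norm_pow]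
    calc ‖qb q N i‖ * ‖q‖ ^ tri i * ‖w‖ ^ i
        ≤ (2 / (1 - ‖q‖)) ^ i * ‖q‖ ^ tri i * ‖w‖ ^ i := by
          have := qb_norm_le hq N i
          gcongr
      _ = (2 * ‖w‖ / (1 - ‖q‖)) ^ i * ‖q‖ ^ tri i := by
          rw [div_pow, div_pow, mul_pow]
          ring
  have h := tendsto_tsum_of_dominated_convergence hbound htend
    (Filter.Eventually.of_forall hb)
  have heq : ∀ N, ∑' i, f N i = qPoch (-w) q N := by
    intro N
    rw [← euler_fin hq w N]
    refine tsum_eq_sum fun i hi => ?_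
    have : N < i := by
      by_contra hc
      exact hi (Finset.mem_range.mpr (by omega))
    rw [hf]
    simp [qb_of_gt this]
  exact tendsto_nhds_unique (h.congr heq) (tendsto_qPoch (-w) hq)

lemma durfee_inf {q : ℂ} (hq : ‖q‖ < 1) (z : ℂ) :
    ∑' j, z ^ j * q ^ (j * j) * (qPoch q q j)⁻¹ * qPochInf (z * q ^ (j + 1)) q = 1 := by
  have hd : 0 < 1 - ‖q‖ := by linarith
  set f : ℕ → ℕ → ℂ :=
    fun N j => z ^ j * q ^ (j * j) * qb q N j * qPoch (z * q ^ (j + 1)) q (N - j) with hf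
  set bound : ℕ → ℝ :=
    fun j => (‖z‖ * (2 / (1 - ‖q‖))) ^ j * ‖q‖ ^ (j * j) * Real.exp (‖z‖ / (1 - ‖q‖))
    with hbdef
  have hbound : Summable bound := by
    refine Summable.mul_right _ ?_
    refine summable_pow_sq (by positivity) (norm_nonneg q) hq (fun j => j * j) fun j => ?_
    show j * j + j ≤ (j + 1) * (j + 1)
    have : (j + 1) * (j + 1) = j * j + 2 * j + 1 := by ring
    omega
  have htend : ∀ j, Tendsto (fun N => f N j) atTop
      (𝓝 (z ^ j * q ^ (j * j) * (qPoch q q j)⁻¹ * qPochInf (z * q ^ (j + 1)) q)) := by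
    intro j
    have h1 : Tendsto (fun N => z ^ j * q ^ (j * j) * qb q N j) atTop
        (𝓝 (z ^ j * q ^ (j * j) * (qPoch q q j)⁻¹)) := (qb_tendsto hq j).const_mul _
    have h2 : Tendsto (fun N => qPoch (z * q ^ (j + 1)) q (N - j)) atTop
        (𝓝 (qPochInf (z * q ^ (j + 1)) q)) :=
      (tendsto_qPoch (z * q ^ (j + 1)) hq).comp (tendsto_sub_atTop_nat j)
    exact h1.mul h2
  have hnormz : ∀ j : ℕ, ‖z * q ^ (j + 1)‖ ≤ ‖z‖ := by
    intro j
    rw [norm_mul, norm_pow]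
    calc ‖z‖ * ‖q‖ ^ (j + 1) ≤ ‖z‖ * 1 :=
          mul_le_mul_of_nonneg_left (pow_le_one₀ (norm_nonneg q) hq.le) (norm_nonneg z)
      _ = ‖z‖ := mul_one _
  have hb : ∀ N j, ‖f N j‖ ≤ bound j := by
    intro N j
    rw [hf, hbdef]
    simp only [norm_mul, norm_pow]
    calc ‖z‖ ^ j * ‖q‖ ^ (j * j) * ‖qb q N j‖ * ‖qPoch (z * q ^ (j + 1)) q (N - j)‖
        ≤ ‖z‖ ^ j * ‖q‖ ^ (j * j) * (2 / (1 - ‖q‖)) ^ j * Real.exp (‖z‖ / (1 - ‖q‖)) := by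
          have h1 := qb_norm_le hq N j
          have h2 : ‖qPoch (z * q ^ (j + 1)) q (N - j)‖ ≤ Real.exp (‖z‖ / (1 - ‖q‖)) := by
            refine (norm_qPoch_le _ hq _).trans (Real.exp_le_exp.2 ?_)
            gcongr
            exact hnormz j
          gcongr
      _ = (‖z‖ * (2 / (1 - ‖q‖))) ^ j * ‖q‖ ^ (j * j) * Real.exp (‖z‖ / (1 - ‖q‖)) := by
          rw [mul_pow]
          ring
  have h := tendsto_tsum_of_dominated_convergence hbound htend
    (Filter.Eventually.of_forall hb)
  have heq : ∀ N, ∑' j, f N j = 1 := by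
    intro N
    rw [← durfee_fin hq N z]
    refine tsum_eq_sum fun j hj => ?_
    have : N < j := by
      by_contra hc
      exact hj (Finset.mem_range.mpr (by omega))
    rw [hf]
    simp [qb_of_gt this]
  have h2 : Tendsto (fun _ : ℕ => (1 : ℂ)) atTop (𝓝 (1 : ℂ)) := tendsto_const_nhds
  exact tendsto_nhds_unique (h.congr heq) h2

lemma half_sq {i : ℕ} : (i ^ 2 + i) / 2 = tri i + i := by
  have h1 : tri (i + 1) * 2 = (i + 1) * i := by
    simpa [tri] using Finset.sum_range_id_mul_two (i + 1)
  have h2 : i ^ 2 + i = (i + 1) * i := by ring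
  rw [h2, ← h1, tri_succ]
  exact Nat.mul_div_cancel _ two_pos

lemma half_sq_succ (i : ℕ) : ((i + 1) ^ 2 + (i + 1)) / 2 = (i ^ 2 + i) / 2 + (i + 1) := by
  rw [show (i + 1) ^ 2 + (i + 1) = (i ^ 2 + i) + (i + 1) * 2 by ring,
    Nat.add_mul_div_right _ _ (by norm_num)]

end Stmt13Aux

open Stmt13Aux

theorem stmt_13 (x q : ℂ) (hq : ‖q‖ < 1) :
    (∑' p : ℕ × ℕ,
        x ^ p.1 * q ^ ((p.1 ^ 2 + p.1) / 2 + p.1 * p.2 + p.2 ^ 2) /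
          (qPoch q q p.1 * qPoch q q p.2) * qPochInf (q ^ (p.1 + p.2 + 1)) q)
      = qPochInf (-(x * q)) q := by
  have hd : 0 < 1 - ‖q‖ := by linarith
  set F : ℕ × ℕ → ℂ := fun p =>
    x ^ p.1 * q ^ ((p.1 ^ 2 + p.1) / 2 + p.1 * p.2 + p.2 ^ 2) /
      (qPoch q q p.1 * qPoch q q p.2) * qPochInf (q ^ (p.1 + p.2 + 1)) q with hF
  set E : ℝ := Real.exp (‖q‖ / (1 - ‖q‖)) with hE
  have hu : Summable (fun i => (‖x‖ / (1 - ‖q‖)) ^ i * ‖q‖ ^ ((i ^ 2 + i) / 2)) := by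
    refine summable_pow_sq (by positivity) (norm_nonneg q) hq _ fun i => ?_
    rw [half_sq_succ]
    omega
  have hv : Summable (fun j => ((1 - ‖q‖)⁻¹) ^ j * ‖q‖ ^ (j ^ 2)) := by
    refine summable_pow_sq (by positivity) (norm_nonneg q) hq (fun j => j ^ 2) fun j => ?_
    show j ^ 2 + j ≤ (j + 1) ^ 2
    have : (j + 1) ^ 2 = j ^ 2 + 2 * j + 1 := by ring
    omega
  have hSuv : Summable (fun p : ℕ × ℕ =>
      ((‖x‖ / (1 - ‖q‖)) ^ p.1 * ‖q‖ ^ ((p.1 ^ 2 + p.1) / 2) * E) *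
        (((1 - ‖q‖)⁻¹) ^ p.2 * ‖q‖ ^ (p.2 ^ 2))) :=
    (hu.mul_right E).mul_of_nonneg hv (fun i => by positivity) (fun j => by positivity)
  have hPinv : ∀ n : ℕ, ‖qPoch q q n‖⁻¹ ≤ ((1 - ‖q‖)⁻¹) ^ n := by
    intro n
    rw [inv_pow]
    exact inv_anti₀ (by positivity) (norm_qPoch_q_ge hq n)
  have hFs : Summable F := by
    refine Summable.of_norm_bounded hSuv ?_
    rintro ⟨i, j⟩
    have hInf : ‖qPochInf (q ^ (i + j + 1)) q‖ ≤ E := by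
      refine (norm_qPochInf_le _ hq).trans (Real.exp_le_exp.2 ?_)
      gcongr
      rw [norm_pow]
      calc ‖q‖ ^ (i + j + 1) ≤ ‖q‖ ^ 1 :=
            pow_le_pow_of_le_one (norm_nonneg q) hq.le (by omega)
        _ = ‖q‖ := pow_one _
    have hstep : ‖F (i, j)‖
        = ‖x‖ ^ i * (‖q‖ ^ ((i ^ 2 + i) / 2) * ‖q‖ ^ (i * j) * ‖q‖ ^ (j ^ 2)) *
            (‖qPoch q q i‖⁻¹ * ‖qPoch q q j‖⁻¹) * ‖qPochInf (q ^ (i + j + 1)) q‖ := by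
      rw [hF]
      simp only [norm_mul, norm_div, norm_pow, ← pow_add]
      rw [div_eq_mul_inv, mul_inv]
    rw [hstep]
    calc ‖x‖ ^ i * (‖q‖ ^ ((i ^ 2 + i) / 2) * ‖q‖ ^ (i * j) * ‖q‖ ^ (j ^ 2)) *
            (‖qPoch q q i‖⁻¹ * ‖qPoch q q j‖⁻¹) * ‖qPochInf (q ^ (i + j + 1)) q‖
        ≤ ‖x‖ ^ i * (‖q‖ ^ ((i ^ 2 + i) / 2) * 1 * ‖q‖ ^ (j ^ 2)) *
            (((1 - ‖q‖)⁻¹) ^ i * ((1 - ‖q‖)⁻¹) ^ j) * E := by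
          gcongr
          · exact pow_le_one₀ (norm_nonneg q) hq.le
          · exact hPinv i
          · exact hPinv j
      _ = ((‖x‖ / (1 - ‖q‖)) ^ i * ‖q‖ ^ ((i ^ 2 + i) / 2) * E) *
            (((1 - ‖q‖)⁻¹) ^ j * ‖q‖ ^ (j ^ 2)) := by
          rw [div_pow]
          have hd' : (1 - ‖q‖) ≠ 0 := hd.ne'
          rw [inv_pow, inv_pow]
          field_simp
  rw [Summable.tsum_prod hFs]
  have hmain : ∀ i : ℕ, (∑' j : ℕ, F (i, j))
      = (qPoch q q i)⁻¹ * q ^ tri i * (x * q) ^ i := by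
    intro i
    have hterm : ∀ j : ℕ, F (i, j)
        = ((qPoch q q i)⁻¹ * q ^ tri i * (x * q) ^ i) *
          ((q ^ i) ^ j * q ^ (j * j) * (qPoch q q j)⁻¹ *
            qPochInf ((q ^ i) * q ^ (j + 1)) q) := by
      intro j
      rw [hF]
      have hEe : (i ^ 2 + i) / 2 + i * j + j ^ 2 = tri i + i + i * j + j * j := by
        rw [half_sq, pow_two]
      have hEe2 : i + j + 1 = i + (j + 1) := by omega
      show x ^ i * q ^ ((i ^ 2 + i) / 2 + i * j + j ^ 2) /
          (qPoch q q i * qPoch q q j) * qPochInf (q ^ (i + j + 1)) q = _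
      rw [hEe, hEe2, pow_add q i (j + 1), pow_add, pow_add, pow_add, pow_mul]
      have hi := qPoch_q_ne_zero hq i
      have hj := qPoch_q_ne_zero hq j
      field_simp
      ring
    rw [tsum_congr hterm, tsum_mul_left, durfee_inf hq (q ^ i), mul_one]
  rw [tsum_congr hmain]
  exact euler_inf hq (x * q)
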